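/- Let N ≥ 1, m ∈ ℝ, p ∈ ℕ, c ∈ (0,1), and C > 0. Let F : ℤ^N × ℤ^N → ℂ satisfy symbol-type bounds of order m, and let g : ℤ^N → ℂ satisfy |g(ζ)| ≤ C(1+|ζ|)^p for all ζ ∈ ℤ^N. Then for every k ∈ ℕ there exists D′_k > 0 such that Σ_{η ∈ ℤ^N, |η| ≥ c|ξ|} |F(η, ξ−η)| · |g(ξ−η)| ≤ D′_k (1+|ξ|)^(−k) for every ξ ∈ ℤ^N. -/

import Mathlib

/-- Inclusion of `ℤᴺ` into `ℝᴺ` with the Euclidean norm. -/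
noncomputable def iZ (N : ℕ) (ξ : Fin N → ℤ) : EuclideanSpace ℝ (Fin N) :=
  WithLp.toLp 2 (fun i => (ξ i : ℝ))

/-- `F` satisfies symbol-type bounds of order `m`. -/
def SymbolBounds (N : ℕ) (m : ℝ) (F : (Fin N → ℤ) → (Fin N → ℤ) → ℂ) : Prop :=
  ∀ k : ℕ, ∃ D > (0 : ℝ), ∀ η ζ : Fin N → ℤ,
    ‖F η ζ‖ ≤ D * ((1 + ‖iZ N η‖) ^ k)⁻¹ * (1 + ‖iZ N ζ‖) ^ m

lemma sum1d : Summable (fun n : ℤ => (((1:ℝ) + |(n:ℝ)|) ^ 2)⁻¹) := by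
  have hnat : Summable (fun n : ℕ => (((n:ℝ) + 1) ^ 2)⁻¹) := by
    have h2 : Summable (fun n : ℕ => (((n:ℝ)) ^ 2)⁻¹) :=
      Real.summable_nat_pow_inv.mpr one_lt_two
    have := (summable_nat_add_iff (f := fun n : ℕ => (((n:ℝ)) ^ 2)⁻¹) 1).mpr h2
    exact this.congr (fun n => by push_cast; ring_nf)
  apply Summable.of_nat_of_neg
  · exact hnat.congr (fun n => by push_cast [abs_of_nonneg (by positivity : (0:ℝ) ≤ (n:ℝ))]; ring_nf)
  · exact hnat.congr (fun n => by
      push_cast [abs_neg, abs_of_nonneg (by positivity : (0:ℝ) ≤ (n:ℝ))]; ring_nf)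

lemma sumPi (N : ℕ) :
    Summable (fun η : Fin N → ℤ => ∏ i, (((1:ℝ) + |((η i : ℤ) : ℝ)|) ^ 2)⁻¹) := by
  induction N with
  | zero => simpa using summable_of_finite_support (Set.toFinite _)
  | succ n ih =>
    have h := sum1d.mul_of_nonneg ih (fun _ => by positivity)
      (fun _ => Finset.prod_nonneg (fun _ _ => by positivity))
    rw [← (Fin.consEquiv (fun _ : Fin (n+1) => ℤ)).summable_iff]
    exact h.congr (fun x => by
      simp [Function.comp, Fin.consEquiv, Fin.prod_univ_succ, mul_comm])

lemma coord_le (N : ℕ) (x : EuclideanSpace ℝ (Fin N)) (i : Fin N) : |x i| ≤ ‖x‖ := by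
  rw [EuclideanSpace.norm_eq]
  have : |x i| = Real.sqrt (‖x i‖ ^ 2) := by
    rw [Real.norm_eq_abs, Real.sqrt_sq_eq_abs, abs_abs]
  rw [this]
  exact Real.sqrt_le_sqrt (Finset.single_le_sum (f := fun j => ‖x j‖ ^ 2)
    (fun j _ => sq_nonneg _) (Finset.mem_univ i))

lemma inv_pow_le_prod (N : ℕ) (η : Fin N → ℤ) :
    ((1 + ‖iZ N η‖) ^ (2 * N))⁻¹ ≤ ∏ i, (((1:ℝ) + |((η i : ℤ) : ℝ)|) ^ 2)⁻¹ := by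
  have hprodpos : (0:ℝ) < ∏ i, ((1:ℝ) + |((η i : ℤ) : ℝ)|) ^ 2 :=
    Finset.prod_pos (fun i _ => by positivity)
  rw [Finset.prod_inv_distrib]
  have hle : ∏ i, ((1:ℝ) + |((η i : ℤ) : ℝ)|) ^ 2 ≤ (1 + ‖iZ N η‖) ^ (2 * N) := by
    rw [pow_mul]
    have : ∀ i ∈ Finset.univ, ((1:ℝ) + |((η i : ℤ) : ℝ)|) ^ 2 ≤ (1 + ‖iZ N η‖) ^ 2 := by
      intro i _
      have h1 : |((η i : ℤ) : ℝ)| ≤ ‖iZ N η‖ := coord_le N (iZ N η) i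
      have : ((1:ℝ) + |((η i : ℤ) : ℝ)|) ≤ 1 + ‖iZ N η‖ := by linarith
      exact pow_le_pow_left₀ (by positivity) this 2
    calc ∏ i, ((1:ℝ) + |((η i : ℤ) : ℝ)|) ^ 2
        ≤ ∏ _i : Fin N, (1 + ‖iZ N η‖) ^ 2 := Finset.prod_le_prod (fun i _ => by positivity) this
      _ = ((1 + ‖iZ N η‖) ^ 2) ^ N := by rw [Finset.prod_const, Finset.card_univ, Fintype.card_fin]
  exact inv_anti₀ hprodpos hle

lemma summable_main (N : ℕ) : Summable (fun η : Fin N → ℤ => ((1 + ‖iZ N η‖) ^ (2 * N))⁻¹) :=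
  (sumPi N).of_nonneg_of_le (fun η => by positivity) (fun η => inv_pow_le_prod N η)

lemma iZ_sub (N : ℕ) (ξ η : Fin N → ℤ) : iZ N (ξ - η) = iZ N ξ - iZ N η := by
  ext i
  show ((ξ i - η i : ℤ) : ℝ) = (iZ N ξ - iZ N η) i
  have : (iZ N ξ - iZ N η) i = ((ξ i : ℝ)) - ((η i : ℝ)) := rfl
  rw [this]; push_cast; ring

theorem stmt_13 (N : ℕ) (hN : 1 ≤ N) (m : ℝ) (p : ℕ) (c : ℝ) (hc0 : 0 < c) (hc1 : c < 1)
    (C : ℝ) (hC : 0 < C) (F : (Fin N → ℤ) → (Fin N → ℤ) → ℂ) (hF : SymbolBounds N m F)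
    (g : (Fin N → ℤ) → ℂ)
    (hg : ∀ ζ : Fin N → ℤ, ‖g ζ‖ ≤ C * (1 + ‖iZ N ζ‖) ^ p) :
    ∀ k : ℕ, ∃ D' > (0 : ℝ), ∀ ξ : Fin N → ℤ,
      Summable (fun η : Fin N → ℤ =>
        if c * ‖iZ N ξ‖ ≤ ‖iZ N η‖ then
          ‖F η (ξ - η)‖ * ‖g (ξ - η)‖ else 0) ∧
      (∑' η : Fin N → ℤ,
        if c * ‖iZ N ξ‖ ≤ ‖iZ N η‖ then
          ‖F η (ξ - η)‖ * ‖g (ξ - η)‖ else 0)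
        ≤ D' * ((1 + ‖iZ N ξ‖) ^ k)⁻¹ := by
  intro k
  set M0 : ℕ := ⌈m⌉₊ with hM0
  set M : ℕ := M0 + p with hMdef
  set K : ℕ := k + 2 * M + 2 * N with hKdef
  obtain ⟨D, hD, hFD⟩ := hF K
  set T : ℝ := ∑' η : Fin N → ℤ, ((1 + ‖iZ N η‖) ^ (2 * N))⁻¹ with hT
  have hT0 : 0 ≤ T := tsum_nonneg (fun η => by positivity)
  refine ⟨D * C * (c ^ (k + M))⁻¹ * (T + 1), by positivity, fun ξ => ?_⟩
  set b : ℝ := 1 + ‖iZ N ξ‖ with hb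
  have hb1 : (1:ℝ) ≤ b := le_add_of_nonneg_right (norm_nonneg _)
  -- pointwise bound
  have key : ∀ η : Fin N → ℤ,
      (if c * ‖iZ N ξ‖ ≤ ‖iZ N η‖ then
          ‖F η (ξ - η)‖ * ‖g (ξ - η)‖ else 0)
        ≤ (D * C * (c ^ (k + M))⁻¹ * (b ^ k)⁻¹) * ((1 + ‖iZ N η‖) ^ (2 * N))⁻¹ := by
    intro η
    by_cases hreg : c * ‖iZ N ξ‖ ≤ ‖iZ N η‖
    · rw [if_pos hreg]
      set a : ℝ := 1 + ‖iZ N η‖ with ha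
      set s : ℝ := 1 + ‖iZ N (ξ - η)‖ with hs
      have ha1 : (1:ℝ) ≤ a := le_add_of_nonneg_right (norm_nonneg _)
      have hs1 : (1:ℝ) ≤ s := le_add_of_nonneg_right (norm_nonneg _)
      have ha0 : (0:ℝ) < a := lt_of_lt_of_le one_pos ha1
      have hb0 : (0:ℝ) < b := lt_of_lt_of_le one_pos hb1
      have hs0 : (0:ℝ) < s := lt_of_lt_of_le one_pos hs1
      have hPeetre : s ≤ a * b := by
        have h1 : ‖iZ N (ξ - η)‖ ≤ ‖iZ N ξ‖ + ‖iZ N η‖ := by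
          rw [iZ_sub]; exact norm_sub_le _ _
        have h2 := norm_nonneg (iZ N ξ)
        have h3 := norm_nonneg (iZ N η)
        simp only [ha, hb, hs]
        nlinarith
      have hcb : c * b ≤ a := by
        have : c * ‖iZ N ξ‖ ≤ ‖iZ N η‖ := hreg
        simp only [ha, hb]
        nlinarith
      -- step 1: bound by symbol estimates
      have h1 : ‖F η (ξ - η)‖ * ‖g (ξ - η)‖
          ≤ (D * (a ^ K)⁻¹ * s ^ m) * (C * s ^ p) := by
        apply mul_le_mul (hFD η (ξ - η)) (hg (ξ - η)) (norm_nonneg _)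
        have : (0:ℝ) ≤ s ^ m := Real.rpow_nonneg hs0.le m
        positivity
      -- step 2: replace rpow m by npow M0
      have h2 : s ^ m ≤ s ^ (M0:ℕ) := by
        have := Real.rpow_le_rpow_of_exponent_le hs1 (Nat.le_ceil m)
        rwa [Real.rpow_natCast] at this
      have h3 : (D * (a ^ K)⁻¹ * s ^ m) * (C * s ^ p)
          ≤ D * C * ((a ^ K)⁻¹ * s ^ M) := by
        have hstep : (D * (a ^ K)⁻¹ * s ^ m) * (C * s ^ p)
            ≤ (D * (a ^ K)⁻¹ * s ^ (M0:ℕ)) * (C * s ^ p) :=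
          mul_le_mul_of_nonneg_right (mul_le_mul_of_nonneg_left h2 (by positivity))
            (by positivity)
        refine hstep.trans (le_of_eq ?_)
        rw [hMdef, pow_add]; ring
      -- step 3: key power inequality
      have h4 : (a ^ K)⁻¹ * s ^ M ≤ (c ^ (k + M))⁻¹ * (b ^ k)⁻¹ * (a ^ (2 * N))⁻¹ := by
        have haK : (0:ℝ) < a ^ K := by positivity
        have hP : (0:ℝ) < c ^ (k + M) * (b ^ k * a ^ (2 * N)) := by positivity
        have hmain : s ^ M * (c ^ (k + M) * (b ^ k * a ^ (2 * N))) ≤ a ^ K := by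
          calc s ^ M * (c ^ (k + M) * (b ^ k * a ^ (2 * N)))
              ≤ (a * b) ^ M * (c ^ (k + M) * (b ^ k * a ^ (2 * N))) := by gcongr
            _ = a ^ (M + 2 * N) * ((c * b) ^ (k + M)) := by
                rw [mul_pow, mul_pow, pow_add, pow_add]; ring
            _ ≤ a ^ (M + 2 * N) * a ^ (k + M) := by gcongr
            _ = a ^ K := by rw [← pow_add]; congr 1; omega
        have hdiv : s ^ M / a ^ K ≤ 1 / (c ^ (k + M) * (b ^ k * a ^ (2 * N))) := by
          rw [div_le_div_iff₀ haK hP, one_mul]; exact hmain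
        calc (a ^ K)⁻¹ * s ^ M = s ^ M / a ^ K := by ring
          _ ≤ 1 / (c ^ (k + M) * (b ^ k * a ^ (2 * N))) := hdiv
          _ = (c ^ (k + M))⁻¹ * (b ^ k)⁻¹ * (a ^ (2 * N))⁻¹ := by
              rw [one_div, mul_inv, mul_inv]; ring
      calc ‖F η (ξ - η)‖ * ‖g (ξ - η)‖
          ≤ D * C * ((a ^ K)⁻¹ * s ^ M) := h1.trans h3
        _ ≤ D * C * ((c ^ (k + M))⁻¹ * (b ^ k)⁻¹ * (a ^ (2 * N))⁻¹) := by
            gcongr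
        _ = (D * C * (c ^ (k + M))⁻¹ * (b ^ k)⁻¹) * ((1 + ‖iZ N η‖) ^ (2 * N))⁻¹ := by
            rw [ha]; ring
    · rw [if_neg hreg]; positivity
  have hBsum : Summable (fun η : Fin N → ℤ =>
      (D * C * (c ^ (k + M))⁻¹ * (b ^ k)⁻¹) * ((1 + ‖iZ N η‖) ^ (2 * N))⁻¹) :=
    (summable_main N).mul_left _
  have hsum : Summable (fun η : Fin N → ℤ =>
      if c * ‖iZ N ξ‖ ≤ ‖iZ N η‖ then
        ‖F η (ξ - η)‖ * ‖g (ξ - η)‖ else 0) := by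
    apply hBsum.of_nonneg_of_le _ key
    intro η
    by_cases hreg : c * ‖iZ N ξ‖ ≤ ‖iZ N η‖
    · rw [if_pos hreg]; positivity
    · rw [if_neg hreg]
  refine ⟨hsum, ?_⟩
  calc (∑' η : Fin N → ℤ,
        if c * ‖iZ N ξ‖ ≤ ‖iZ N η‖ then
          ‖F η (ξ - η)‖ * ‖g (ξ - η)‖ else 0)
      ≤ ∑' η : Fin N → ℤ,
          (D * C * (c ^ (k + M))⁻¹ * (b ^ k)⁻¹) * ((1 + ‖iZ N η‖) ^ (2 * N))⁻¹ :=
        Summable.tsum_le_tsum key hsum hBsum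
    _ = (D * C * (c ^ (k + M))⁻¹ * (b ^ k)⁻¹) * T := by rw [tsum_mul_left]
    _ ≤ (D * C * (c ^ (k + M))⁻¹ * (b ^ k)⁻¹) * (T + 1) := by
        gcongr; linarith
    _ = D * C * (c ^ (k + M))⁻¹ * (T + 1) * ((1 + ‖iZ N ξ‖) ^ k)⁻¹ := by
        rw [hb]; ring
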